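/- Let (n,p) be a limit solution with initial datum n⁰. Then for all but countably many t > 0 (in particular for almost every t > 0) the set Ω(t) ∖ Ω̃(t) has Lebesgue measure zero; since Ω̃(t) ⊆ Ω(t) always holds, for such t the sets Ω(t) and Ω̃(t) coincide up to a Lebesgue-null set. -/

import Mathlib

open MeasureTheory Metric Set Filter Real
open scoped ENNReal RealInnerProductSpace

noncomputable section

/-- Euclidean space `ℝ^N`. -/
abbrev Euc (N : ℕ) : Type := EuclideanSpace ℝ (Fin N)

/-- The spatial Laplacian of a function on `ℝ^N`. -/
def lap {N : ℕ} (φ : Euc N → ℝ) (x : Euc N) : ℝ :=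
  ∑ i : Fin N, fderiv ℝ (fderiv ℝ φ) x (EuclideanSpace.single i 1) (EuclideanSpace.single i 1)

/-- Smooth, compactly supported test functions on `ℝ^N`. -/
def IsTestFun {N : ℕ} (φ : Euc N → ℝ) : Prop :=
  ContDiff ℝ (⊤ : ℕ∞) φ ∧ HasCompactSupport φ

/-- Smooth test functions compactly supported in `Q = ℝ^N × (0,∞)`. -/
def IsTestFunQ {N : ℕ} (φ : Euc N × ℝ → ℝ) : Prop :=
  ContDiff ℝ (⊤ : ℕ∞) φ ∧ HasCompactSupport φ ∧ tsupport φ ⊆ {q : Euc N × ℝ | 0 < q.2}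

/-- The parabolic domain `Q = ℝ^N × (0,∞)`. -/
def Qset (N : ℕ) : Set (Euc N × ℝ) := Set.univ ×ˢ Set.Ioi (0 : ℝ)

/-- The hypotheses on the growth function `G`: it is `C¹`, strictly decreasing
(negative derivative) on `[0,∞)`, and vanishes at the homeostatic pressure `p_M > 0`. -/
structure GCond (G : ℝ → ℝ) (pM : ℝ) : Prop where
  smooth : ContDiff ℝ 1 G
  deriv_neg : ∀ q : ℝ, 0 ≤ q → deriv G q < 0
  pM_pos : 0 < pM
  G_pM : G pM = 0

/-- A (stiff) limit solution `(n,p)` of `∂ₜ n = Δp + n G(p)` with initial datum `n0`,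
with the pressure taken in its good (pointwise) representative, and `gp` the weak
spatial gradient of `p`. -/
structure LimitSolution (N : ℕ) (G : ℝ → ℝ) (pM : ℝ) (n0 : Euc N → ℝ)
    (n p : Euc N → ℝ → ℝ) (gp : Euc N → ℝ → Euc N) : Prop where
  n0_int : Integrable n0
  n0_range : ∀ᵐ x : Euc N ∂volume, 0 ≤ n0 x ∧ n0 x ≤ 1
  n_meas : Measurable fun q : Euc N × ℝ => n q.1 q.2
  p_meas : Measurable fun q : Euc N × ℝ => p q.1 q.2
  gp_meas : Measurable fun q : Euc N × ℝ => gp q.1 q.2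
  n_range : ∀ᵐ q : Euc N × ℝ ∂volume, 0 < q.2 → 0 ≤ n q.1 q.2 ∧ n q.1 q.2 ≤ 1
  p_range : ∀ (x : Euc N) (t : ℝ), 0 ≤ t → 0 ≤ p x t ∧ p x t ≤ pM
  saturation : ∀ᵐ q : Euc N × ℝ ∂volume, 0 < q.2 → n q.1 q.2 < 1 → p q.1 q.2 = 0
  n_integrable : ∀ t : ℝ, 0 ≤ t → Integrable fun x => n x t
  n_L1cont : ∀ t₀ : ℝ, 0 ≤ t₀ →
    Tendsto (fun t => ∫ x, |n x t - n x t₀|) (nhdsWithin t₀ (Set.Ici 0)) (nhds 0)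
  n_init : ∀ᵐ x : Euc N ∂volume, n x 0 = n0 x
  mass : ∀ t : ℝ, 0 ≤ t → ∫ x, n x t ≤ Real.exp (G 0 * t) * ∫ x, n0 x
  gp_sq_int : ∀ T : ℝ, 0 < T →
    IntegrableOn (fun q : Euc N × ℝ => ‖gp q.1 q.2‖ ^ 2) (Set.univ ×ˢ Set.Ioc 0 T)
  gp_weak : ∀ φ : Euc N × ℝ → ℝ, IsTestFunQ φ → ∀ i : Fin N,
    ∫ q in Qset N, p q.1 q.2 * fderiv ℝ (fun y => φ (y, q.2)) q.1 (EuclideanSpace.single i 1)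
      = - ∫ q in Qset N, gp q.1 q.2 i * φ q
  pde : ∀ φ : Euc N × ℝ → ℝ, IsTestFunQ φ →
    ∫ q in Qset N, (n q.1 q.2 * deriv (fun s => φ (q.1, s)) q.2
      + p q.1 q.2 * lap (fun y => φ (y, q.2)) q.1
      + n q.1 q.2 * G (p q.1 q.2) * φ q) = 0
  p_time_mono_distrib : ∀ φ : Euc N × ℝ → ℝ, IsTestFunQ φ → (∀ q, 0 ≤ φ q) →
    ∫ q in Qset N, p q.1 q.2 * deriv (fun s => φ (q.1, s)) q.2 ≤ 0
  semiconvexity : ∀ φ : Euc N × ℝ → ℝ, IsTestFunQ φ → (∀ q, 0 ≤ φ q) →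
    0 ≤ ∫ q in Qset N, (p q.1 q.2 * lap (fun y => φ (y, q.2)) q.1 + G (p q.1 q.2) * φ q)
  p_mono : ∀ x : Euc N, MonotoneOn (fun t => p x t) (Set.Ici 0)
  p_right_cont : ∀ (x : Euc N) (t₀ : ℝ), 0 ≤ t₀ →
    Tendsto (fun t => p x t) (nhdsWithin t₀ (Set.Ioi t₀)) (nhds (p x t₀))
  p_usc : UpperSemicontinuousOn (fun q : Euc N × ℝ => p q.1 q.2) (Set.univ ×ˢ Set.Ici 0)
  p_mean : ∀ (x₀ : Euc N) (t₀ : ℝ), 0 ≤ t₀ →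
    Tendsto (fun r : ℝ => ((volume (ball x₀ r)).toReal)⁻¹ *
        ∫ x in ball x₀ r, (r ^ 2)⁻¹ * ∫ s in Set.Ioc t₀ (t₀ + r ^ 2), p x s)
      (nhdsWithin 0 (Set.Ioi 0)) (nhds (p x₀ t₀))

/-- The Baiocchi-type variable `w(x,t) = ∫₀ᵗ e^{-G(0)s} p(x,s) ds`. -/
def wFun {N : ℕ} (G : ℝ → ℝ) (p : Euc N → ℝ → ℝ) (x : Euc N) (t : ℝ) : ℝ :=
  ∫ s in (0:ℝ)..t, Real.exp (-(G 0) * s) * p x s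

/-- The set `Ω(t) = {p(·,t) > 0}`. -/
def Omega {N : ℕ} (p : Euc N → ℝ → ℝ) (t : ℝ) : Set (Euc N) := {x | 0 < p x t}

/-- The set `Ω̃(t) = {w(·,t) > 0}`. -/
def OmegaTilde {N : ℕ} (G : ℝ → ℝ) (p : Euc N → ℝ → ℝ) (t : ℝ) : Set (Euc N) :=
  {x | 0 < wFun G p x t}

/-- `F̃(x,t) = e^{-G(0)t} n(x,t) - n⁰(x) + ∫₀ᵗ e^{-G(0)s} n(x,s)(G(0) - G(p(x,s))) ds`. -/
def Ftilde {N : ℕ} (G : ℝ → ℝ) (n0 : Euc N → ℝ) (n p : Euc N → ℝ → ℝ)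
    (x : Euc N) (t : ℝ) : ℝ :=
  Real.exp (-(G 0) * t) * n x t - n0 x
    + ∫ s in (0:ℝ)..t, Real.exp (-(G 0) * s) * n x s * (G 0 - G (p x s))

/-- `F(x,t) = e^{-G(0)t} - n⁰(x) + ∫₀ᵗ e^{-G(0)s} (G(0) - G(p(x,s))) ds`. -/
def Ffun {N : ℕ} (G : ℝ → ℝ) (n0 : Euc N → ℝ) (p : Euc N → ℝ → ℝ)
    (x : Euc N) (t : ℝ) : ℝ :=
  Real.exp (-(G 0) * t) - n0 x
    + ∫ s in (0:ℝ)..t, Real.exp (-(G 0) * s) * (G 0 - G (p x s))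


/-- If `p(x,s₀) > 0` for some `0 ≤ s₀ < t`, then `w(x,t) > 0`. -/
lemma wFun_pos_of_p_pos {N : ℕ} {G : ℝ → ℝ} {pM : ℝ} {p : Euc N → ℝ → ℝ} {x : Euc N}
    (hmono : MonotoneOn (fun t => p x t) (Set.Ici 0))
    (hrange : ∀ t : ℝ, 0 ≤ t → 0 ≤ p x t ∧ p x t ≤ pM)
    {t s₀ : ℝ} (hs₀ : 0 ≤ s₀) (hst : s₀ < t) (hp : 0 < p x s₀) :
    0 < wFun G p x t := by
  have ht : 0 < t := lt_of_le_of_lt hs₀ hst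
  set g : ℝ → ℝ := fun s => Real.exp (-(G 0) * s) * p x (max s 0) with hg
  have hPmono : Monotone fun s => p x (max s 0) := fun a b hab =>
    hmono (le_max_right a 0) (le_max_right b 0) (max_le_max hab le_rfl)
  have hgmeas : Measurable g :=
    (Real.measurable_exp.comp (measurable_const.mul measurable_id)).mul hPmono.measurable
  have hgnonneg : ∀ s, 0 ≤ g s := fun s =>
    mul_nonneg (Real.exp_pos _).le (hrange _ (le_max_right _ _)).1
  have hgint : IntegrableOn g (Set.Ioc 0 t) := by
    apply Measure.integrableOn_of_bounded (M := Real.exp (|G 0| * t) * pM)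
    · exact measure_Ioc_lt_top.ne
    · exact hgmeas.aestronglyMeasurable
    · filter_upwards [ae_restrict_mem measurableSet_Ioc] with s hs
      rw [Real.norm_eq_abs, abs_of_nonneg (hgnonneg s)]
      have h1 : Real.exp (-(G 0) * s) ≤ Real.exp (|G 0| * t) := by
        apply Real.exp_le_exp.2
        calc -(G 0) * s ≤ |G 0| * s := by
              apply mul_le_mul_of_nonneg_right (neg_le_abs _) hs.1.le
          _ ≤ |G 0| * t := by
              apply mul_le_mul_of_nonneg_left hs.2 (abs_nonneg _)
      exact mul_le_mul h1 (hrange _ (le_max_right _ _)).2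
        (hrange _ (le_max_right _ _)).1 (Real.exp_pos _).le
  set c : ℝ := (Real.exp (|G 0| * t))⁻¹ * p x s₀ with hc
  have hcpos : 0 < c := mul_pos (inv_pos.2 (Real.exp_pos _)) hp
  have hlow : ∀ s ∈ Set.Ioc s₀ t, c ≤ g s := by
    intro s hs
    have hs0 : (0:ℝ) ≤ s := le_trans hs₀ hs.1.le
    have h1 : (Real.exp (|G 0| * t))⁻¹ ≤ Real.exp (-(G 0) * s) := by
      rw [← Real.exp_neg]
      apply Real.exp_le_exp.2
      calc -(|G 0| * t) ≤ -(|G 0| * s) := by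
            apply neg_le_neg; exact mul_le_mul_of_nonneg_left hs.2 (abs_nonneg _)
        _ ≤ -(G 0) * s := by
            rw [neg_mul]; apply neg_le_neg; exact mul_le_mul_of_nonneg_right (le_abs_self _) hs0
    have h2 : p x s₀ ≤ p x (max s 0) := hmono hs₀ (Set.mem_Ici.2 (le_max_right _ _))
      (le_max_of_le_left hs.1.le)
    exact mul_le_mul h1 h2 (hrange _ hs₀).1 (Real.exp_pos _).le
  have key : c * (volume (Set.Ioc s₀ t)).toReal ≤ ∫ s in Set.Ioc s₀ t, g s :=
    setIntegral_ge_of_const_le_real measurableSet_Ioc measure_Ioc_lt_top.ne hlow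
      (hgint.mono_set (Set.Ioc_subset_Ioc hs₀ le_rfl))
  have hvol : (volume (Set.Ioc s₀ t)).toReal = t - s₀ := by
    rw [Real.volume_Ioc, ENNReal.toReal_ofReal (by linarith)]
  have h3 : (0:ℝ) < ∫ s in Set.Ioc s₀ t, g s := by
    refine lt_of_lt_of_le ?_ key
    rw [hvol]; exact mul_pos hcpos (by linarith)
  have h4 : ∫ s in Set.Ioc s₀ t, g s ≤ ∫ s in Set.Ioc 0 t, g s := by
    apply setIntegral_mono_set hgint
    · exact Filter.Eventually.of_forall fun s => hgnonneg s
    · exact HasSubset.Subset.eventuallyLE (Set.Ioc_subset_Ioc hs₀ le_rfl)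
  have hweq : wFun G p x t = ∫ s in Set.Ioc 0 t, g s := by
    rw [wFun, intervalIntegral.integral_of_le ht.le]
    apply setIntegral_congr_fun measurableSet_Ioc
    intro s hs
    simp [hg, max_eq_left hs.1.le]
  rw [hweq]; linarith

/-- **Corollary 2.9.** `Ω̃(t) ⊆ Ω(t)` for all `t > 0`, and for all but countably many
`t > 0` (in particular for a.e. `t > 0`) the difference `Ω(t) ∖ Ω̃(t)` is Lebesgue null,
so that the two sets coincide up to a null set. -/
theorem Omega_eq_OmegaTilde_ae {N : ℕ} (hN : 1 ≤ N) (G : ℝ → ℝ) (pM : ℝ)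
    (hG : GCond G pM) (n0 : Euc N → ℝ) (n p : Euc N → ℝ → ℝ) (gp : Euc N → ℝ → Euc N)
    (hsol : LimitSolution N G pM n0 n p gp) :
    (∀ t : ℝ, 0 < t → OmegaTilde G p t ⊆ Omega p t) ∧
    ∃ C : Set ℝ, C.Countable ∧
      ∀ t : ℝ, 0 < t → t ∉ C → volume (Omega p t \ OmegaTilde G p t) = 0 := by
  constructor
  · -- Easy direction: Ω̃(t) ⊆ Ω(t)
    intro t ht x hx
    simp only [OmegaTilde, Set.mem_setOf_eq] at hx
    by_contra hpx
    simp only [Omega, Set.mem_setOf_eq] at hpx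
    have hp0 : p x t = 0 := le_antisymm (not_lt.1 hpx) (hsol.p_range x t ht.le).1
    have hzero : wFun G p x t = 0 := by
      have heq : Set.EqOn (fun s => Real.exp (-(G 0) * s) * p x s) (fun _ => (0:ℝ))
          (Set.uIcc 0 t) := by
        intro s hs
        rw [Set.uIcc_of_le ht.le] at hs
        have h1 : p x s ≤ p x t := hsol.p_mono x hs.1 ht.le hs.2
        have h2 : 0 ≤ p x s := (hsol.p_range x s hs.1).1
        simp [show p x s = 0 by linarith]
      rw [wFun, intervalIntegral.integral_congr heq, intervalIntegral.integral_zero]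
    linarith
  · -- Hard direction
    have hps : ∀ s : ℝ, Measurable fun x : Euc N => p x s :=
      fun s => hsol.p_meas.comp (measurable_id.prodMk measurable_const)
    set A : ℝ → Set (Euc N) := fun t =>
      if 0 < t then {x | 0 < p x t ∧ ∀ q : ℚ, (q:ℝ) ∈ Set.Ico 0 t → p x q = 0}
      else ∅ with hA
    have hAmeas : ∀ t, MeasurableSet (A t) := by
      intro t
      by_cases h : 0 < t
      · simp only [hA, if_pos h]
        have heq : {x : Euc N | 0 < p x t ∧ ∀ q : ℚ, (q:ℝ) ∈ Set.Ico 0 t → p x q = 0}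
            = {x | 0 < p x t} ∩ ⋂ q : ℚ, {x | (q:ℝ) ∈ Set.Ico 0 t → p x ↑q = 0} := by
          ext x; simp [Set.mem_iInter]
        rw [heq]
        refine (measurableSet_lt measurable_const (hps t)).inter
          (MeasurableSet.iInter fun q => ?_)
        by_cases hq : (q:ℝ) ∈ Set.Ico 0 t
        · have h2 : {x : Euc N | (q:ℝ) ∈ Set.Ico 0 t → p x ↑q = 0} = {x | p x ↑q = 0} := by
            ext x; simp [hq]
          rw [h2]
          exact measurableSet_eq_fun (hps q) measurable_const
        · have h2 : {x : Euc N | (q:ℝ) ∈ Set.Ico 0 t → p x ↑q = 0} = Set.univ := by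
            ext x; simp [hq]
          rw [h2]; exact MeasurableSet.univ
      · simp only [hA, if_neg h]; exact MeasurableSet.empty
    have hAdisj : Pairwise (Function.onFun Disjoint A) := by
      have key : ∀ t t' : ℝ, t < t' → Disjoint (A t) (A t') := by
        intro t t' h
        by_cases ht' : 0 < t'
        swap
        · simp only [hA, if_neg ht']; exact disjoint_bot_right
        by_cases ht : 0 < t
        swap
        · simp only [hA, if_neg ht]; exact disjoint_bot_left
        rw [Set.disjoint_left]
        intro x hx hx'
        simp only [hA, if_pos ht, if_pos ht', Set.mem_setOf_eq] at hx hx'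
        obtain ⟨q, hq1, hq2⟩ := exists_rat_btwn h
        have h0 : p x ↑q = 0 := hx'.2 q ⟨(ht.trans hq1).le, hq2⟩
        have hle : p x t ≤ p x ↑q := hsol.p_mono x ht.le (ht.trans hq1).le hq1.le
        have := hx.1
        linarith
      intro t t' hne
      rcases hne.lt_or_gt with h | h
      · exact key t t' h
      · exact (key t' t h).symm
    have hC : Set.Countable {t : ℝ | 0 < volume (A t)} :=
      MeasureTheory.Measure.countable_meas_pos_of_disjoint_iUnion hAmeas hAdisj
    refine ⟨_, hC, ?_⟩
    intro t ht htC
    have hA0 : volume (A t) = 0 := by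
      simp only [Set.mem_setOf_eq, not_lt] at htC
      exact le_antisymm htC zero_le
    refine measure_mono_null ?_ hA0
    intro x hx
    obtain ⟨hx1, hx2⟩ := hx
    simp only [Omega, Set.mem_setOf_eq] at hx1
    simp only [hA, if_pos ht, Set.mem_setOf_eq]
    refine ⟨hx1, fun q hq => ?_⟩
    by_contra hpq
    have hpq' : 0 < p x ↑q := lt_of_le_of_ne (hsol.p_range x q hq.1).1 (Ne.symm hpq)
    exact hx2 (wFun_pos_of_p_pos (hsol.p_mono x) (fun s hs => hsol.p_range x s hs)
      hq.1 hq.2 hpq')
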